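/- Let A be a real 2×2 matrix with β_1 = a_{11} − a_{21} ≤ 0 and β_2 = a_{22} − a_{12} > 0, and let the constraint set be C = [α, 1] with 0 < α < 1. Then m* = α is the unique constrained evolutionarily stable strategy of the constrained single-population game. -/
import Mathlib


/-- Payoff of mixed strategy `x` against population state `m` in a single-population
game with 2×2 payoff matrix entries `a11 a12 a21 a22`. -/
def uA (a11 a12 a21 a22 x m : ℝ) : ℝ :=
  x * m * a11 + x * (1 - m) * a12 + (1 - x) * m * a21 + (1 - x) * (1 - m) * a22

/-- `m'` is a constrained evolutionarily stable strategy w.r.t. constraint set `C`: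
`m' ∈ C` and for every `m ∈ C` with `m ≠ m'` there is `ε̄ ∈ (0,1]` such that `m'`
strictly outperforms `m` against `ε m + (1 − ε) m'` for all `ε ∈ (0, ε̄)`. -/
def IsCESS (a11 a12 a21 a22 : ℝ) (C : Set ℝ) (m' : ℝ) : Prop :=
  m' ∈ C ∧ ∀ m ∈ C, m ≠ m' → ∃ εb ∈ Set.Ioc (0:ℝ) 1, ∀ ε ∈ Set.Ioo (0:ℝ) εb,
    uA a11 a12 a21 a22 m' (ε * m + (1 - ε) * m') >
      uA a11 a12 a21 a22 m (ε * m + (1 - ε) * m')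

lemma uA_diff (a11 a12 a21 a22 x y p : ℝ) :
    uA a11 a12 a21 a22 x p - uA a11 a12 a21 a22 y p
      = (x - y) * (p * (a11 - a21) - (1 - p) * (a22 - a12)) := by
  unfold uA; ring

/-- If β1 = a11 − a21 ≤ 0, β2 = a22 − a12 > 0 and C = [α, 1] with
0 < α < 1, then α is the unique constrained ESS. -/
theorem stmt9 (a11 a12 a21 a22 α : ℝ)
    (hβ1 : a11 - a21 ≤ 0) (hβ2 : a22 - a12 > 0) (hα0 : 0 < α) (hα1 : α < 1) :
    IsCESS a11 a12 a21 a22 (Set.Icc α 1) α ∧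
    (∀ m, IsCESS a11 a12 a21 a22 (Set.Icc α 1) m → m = α) := by
  have key : ∀ p : ℝ, 0 < p → p < 1 →
      p * (a11 - a21) - (1 - p) * (a22 - a12) < 0 := by
    intro p hp0 hp1
    nlinarith
  constructor
  · refine ⟨⟨le_refl α, le_of_lt hα1⟩, ?_⟩
    rintro m ⟨hmα, hm1⟩ hmne
    have hm : α < m := lt_of_le_of_ne hmα (Ne.symm hmne)
    refine ⟨1, ⟨one_pos, le_refl 1⟩, ?_⟩
    rintro ε ⟨hε0, hε1⟩
    set p := ε * m + (1 - ε) * α with hp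
    have hp0 : 0 < p := by nlinarith
    have hp1 : p < 1 := by nlinarith
    have hf := key p hp0 hp1
    have := uA_diff a11 a12 a21 a22 α m p
    nlinarith
  · rintro m ⟨⟨hmα, hm1⟩, hm⟩
    by_contra hne
    have hm' : α < m := lt_of_le_of_ne hmα (Ne.symm hne)
    obtain ⟨εb, ⟨hεb0, hεb1⟩, hεb⟩ := hm α ⟨le_refl α, le_of_lt hα1⟩ (ne_of_lt hm')
    have hε : εb / 2 ∈ Set.Ioo (0:ℝ) εb := ⟨by linarith, by linarith⟩
    have h := hεb (εb / 2) hε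
    set ε := εb / 2 with hεdef
    have hε0 : 0 < ε := hε.1
    have hε1 : ε ≤ 1/2 := by rw [hεdef]; linarith
    set p := ε * α + (1 - ε) * m with hp
    have hp0 : 0 < p := by nlinarith
    have hp1 : p < 1 := by nlinarith
    have hf := key p hp0 hp1
    have hd := uA_diff a11 a12 a21 a22 m α p
    nlinarith
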